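/- Let φ₊, φ₋ : ℤ → ℂ be two sequences both satisfying the Riccati-type equation α φ φ⁻ − φ⁻ + z φ = z β (pointwise on ℤ) for fixed z ∈ ℂ \ {0} and sequences α, β : ℤ → ℂ, and suppose φ₊(n) ≠ φ₋(n) for all n. Define 𝔣 = 2/(φ₊ − φ₋), 𝔤 = (φ₊ + φ₋)/(φ₊ − φ₋), 𝔥 = 2φ₊φ₋/(φ₊ − φ₋). Then the following identities hold on ℤ: (i) z(𝔤⁻ − 𝔤) + zβ𝔣 + α𝔥⁻ = 0; (ii) zβ𝔣⁻ + α𝔥 − 𝔤 + 𝔤⁻ = 0; (iii) −𝔣 + z𝔣⁻ + α(𝔤 + 𝔤⁻) = 0; (iv) zβ(𝔤⁻ + 𝔤) − z𝔥 + 𝔥⁻ = 0; (v) 𝔤² − 𝔣𝔥 = 1. -/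

import Mathlib

/-- If `φ₊`, `φ₋` both solve the Riccati-type equation
`α φ φ⁻ − φ⁻ + z φ = z β` and never coincide, then the quantities
`𝔣 = 2/(φ₊−φ₋)`, `𝔤 = (φ₊+φ₋)/(φ₊−φ₋)`, `𝔥 = 2φ₊φ₋/(φ₊−φ₋)` satisfy the
four linear identities and the quadratic identity `𝔤² − 𝔣𝔥 = 1`. -/
theorem stmt4 (α β : ℤ → ℂ) (z : ℂ) (hz : z ≠ 0) (φp φm : ℤ → ℂ)
    (hp : ∀ n : ℤ, α n * φp n * φp (n - 1) - φp (n - 1) + z * φp n = z * β n)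
    (hm : ∀ n : ℤ, α n * φm n * φm (n - 1) - φm (n - 1) + z * φm n = z * β n)
    (hne : ∀ n : ℤ, φp n ≠ φm n)
    (f g h : ℤ → ℂ)
    (hf : ∀ n, f n = 2 / (φp n - φm n))
    (hg : ∀ n, g n = (φp n + φm n) / (φp n - φm n))
    (hh : ∀ n, h n = 2 * φp n * φm n / (φp n - φm n)) :
    ∀ n : ℤ,
      z * (g (n - 1) - g n) + z * β n * f n + α n * h (n - 1) = 0 ∧
      z * β n * f (n - 1) + α n * h n - g n + g (n - 1) = 0 ∧
      -f n + z * f (n - 1) + α n * (g n + g (n - 1)) = 0 ∧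
      z * β n * (g (n - 1) + g n) - z * h n + h (n - 1) = 0 ∧
      (g n) ^ 2 - f n * h n = 1 := by
  intro n
  have hd : φp n - φm n ≠ 0 := sub_ne_zero.mpr (hne n)
  have hd' : φp (n - 1) - φm (n - 1) ≠ 0 := sub_ne_zero.mpr (hne (n - 1))
  have Rp := hp n
  have Rm := hm n
  refine ⟨?_, ?_, ?_, ?_, ?_⟩
  · rw [hg, hg, hf, hh]
    field_simp
    linear_combination 2 * φm (n - 1) * Rp -
      2 * φp (n - 1) * Rm
  · rw [hg, hg, hf, hh]
    field_simp
    linear_combination 2 * φm n * Rp -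
      2 * φp n * Rm
  · rw [hg, hg, hf, hf]
    field_simp
    linear_combination 2 * Rp - 2 * Rm
  · rw [hg, hg, hh, hh]
    field_simp
    linear_combination 2 * φm n * φm (n - 1) * Rp -
      2 * φp n * φp (n - 1) * Rm
  · rw [hg, hf, hh]
    field_simp
    ring
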